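/- arXiv:1903.01020 — 5 statements merged into one kernel-verified Lean document; each statement's English description precedes it below -/
import Mathlib

section
/- Let (X,σ) be an unbalanced connected magnetic graph. Then the complex linear span of the magnetic atoms m^σ_{uv} = δ_u − σ_{uv} δ_v, taken over all adjacent pairs u ∼ v, equals the whole space ℓ₂(V(X)) of complex-valued functions on V(X). -/
namespace MagneticGraph

variable {V : Type*}

/-- `σ` is a signature on `G`: unimodular on edges and conjugate-symmetric. -/
def IsSignature (G : SimpleGraph V) (σ : V → V → ℂ) : Prop :=
  ∀ u v, G.Adj u v → ‖σ u v‖ = 1 ∧ σ v u = starRingEnd ℂ (σ u v)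

/-- Product of the signature along (the darts of) a walk. -/
def sigProd {G : SimpleGraph V} (σ : V → V → ℂ) {u v : V} (w : G.Walk u v) : ℂ :=
  (w.darts.map fun d => σ d.toProd.1 d.toProd.2).prod

/-- `(X,σ)` is unbalanced: some directed cycle has signature product `≠ 1`. -/
def Unbalanced (G : SimpleGraph V) (σ : V → V → ℂ) : Prop :=
  ∃ (u : V) (w : G.Walk u u), w.IsCycle ∧ sigProd σ w ≠ 1

/-- `(X,σ)` is balanced: every directed cycle has signature product `1`. -/
def Balanced (G : SimpleGraph V) (σ : V → V → ℂ) : Prop :=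
  ∀ (u : V) (w : G.Walk u u), w.IsCycle → sigProd σ w = 1

/-- The σ-Lipschitz (semi)norm `max_{u∼v} |f(u) - σ_{uv} f(v)|`. -/
noncomputable def lipNorm (G : SimpleGraph V) (σ : V → V → ℂ) (f : V → ℂ) : ℝ :=
  sSup {r : ℝ | ∃ u v, G.Adj u v ∧ r = ‖f u - σ u v * f v‖}

/-- The magnetic atom `m^σ_{uv} = δ_u - σ_{uv} δ_v`. -/
def atom [DecidableEq V] (σ : V → V → ℂ) (u v : V) : V → ℂ :=
  fun w => (if w = u then (1 : ℂ) else 0) - σ u v * (if w = v then (1 : ℂ) else 0)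

/-- Membership in the magnetic Arens–Eells space: a finite linear combination of atoms. -/
def InAE [DecidableEq V] (G : SimpleGraph V) (σ : V → V → ℂ) (m : V → ℂ) : Prop :=
  ∃ (n : ℕ) (a : Fin n → ℂ) (p q : Fin n → V),
    (∀ i, G.Adj (p i) (q i)) ∧ m = ∑ i, a i • atom σ (p i) (q i)

/-- The magnetic Arens–Eells norm: infimum of `Σ|aᵢ|` over representations by atoms. -/
noncomputable def aeNorm [DecidableEq V] (G : SimpleGraph V) (σ : V → V → ℂ) (m : V → ℂ) : ℝ :=
  sInf {s : ℝ | ∃ (n : ℕ) (a : Fin n → ℂ) (p q : Fin n → V),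
    (∀ i, G.Adj (p i) (q i)) ∧ m = ∑ i, a i • atom σ (p i) (q i) ∧
    s = ∑ i, ‖a i‖}

lemma atom_eq [DecidableEq V] (σ : V → V → ℂ) (u v : V) :
    atom σ u v = ((Pi.single u 1 : V → ℂ) - σ u v • (Pi.single v 1 : V → ℂ)) := by
  funext w
  simp [atom, Pi.single_apply, smul_eq_mul]

lemma walk_mem [DecidableEq V] {G : SimpleGraph V} {σ : V → V → ℂ}
    (S : Submodule ℂ (V → ℂ))
    (hS : ∀ u v, G.Adj u v → atom σ u v ∈ S)
    {u v : V} (w : G.Walk u v) :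
    ((Pi.single u 1 : V → ℂ) - sigProd σ w • (Pi.single v 1 : V → ℂ)) ∈ S := by
  induction w with
  | nil => simp [sigProd]
  | @cons a b c h p ih =>
    have hs : sigProd σ (SimpleGraph.Walk.cons h p) = σ a b * sigProd σ p := by
      simp [sigProd]
    have key : ((Pi.single a 1 : V → ℂ) - sigProd σ (SimpleGraph.Walk.cons h p) • (Pi.single c 1 : V → ℂ))
        = atom σ a b + σ a b • ((Pi.single b 1 : V → ℂ) - sigProd σ p • (Pi.single c 1 : V → ℂ)) := by
      rw [hs, atom_eq]
      module
    rw [key]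
    exact S.add_mem (hS a b h) (S.smul_mem _ ih)

/-- for an unbalanced connected magnetic graph, the magnetic atoms span
all of `ℓ₂(V(X)) = ℂ^{V(X)}`. -/
theorem stmt3 {V : Type*} [Fintype V] [DecidableEq V] (G : SimpleGraph V) (σ : V → V → ℂ)
    (hσ : IsSignature G σ) (hconn : G.Connected) (hunb : Unbalanced G σ) :
    Submodule.span ℂ {m : V → ℂ | ∃ u v, G.Adj u v ∧ m = atom σ u v} = ⊤ := by
  set S := Submodule.span ℂ {m : V → ℂ | ∃ u v, G.Adj u v ∧ m = atom σ u v} with hSdef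
  have hS : ∀ u v, G.Adj u v → atom σ u v ∈ S := fun u v h =>
    Submodule.subset_span ⟨u, v, h, rfl⟩
  obtain ⟨u, w, _, hne⟩ := hunb
  have hu : ((Pi.single u 1 : V → ℂ)) ∈ S := by
    have h1 := walk_mem S hS w
    have h2 : ((1 - sigProd σ w) • (Pi.single u 1 : V → ℂ)) ∈ S := by
      rwa [sub_smul, one_smul]
    have h3 := S.smul_mem (1 - sigProd σ w)⁻¹ h2
    rwa [smul_smul, inv_mul_cancel₀ (sub_ne_zero.mpr (Ne.symm hne)), one_smul] at h3
  have hv : ∀ v : V, ((Pi.single v 1 : V → ℂ)) ∈ S := by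
    intro v
    obtain ⟨p⟩ := hconn.preconnected v u
    have h1 := walk_mem S hS p
    have h2 := S.add_mem h1 (S.smul_mem (sigProd σ p) hu)
    simpa using h2
  rw [Submodule.eq_top_iff']
  intro f
  have hf : f = ∑ v : V, f v • ((Pi.single v 1 : V → ℂ)) := by
    funext w
    simp [Pi.single_apply]
  rw [hf]
  exact Submodule.sum_mem S fun v _ => S.smul_mem _ (hv v)

end MagneticGraph
end

section
/- Let (X,σ) be an unbalanced connected magnetic graph. Define for each m in AE_σ(X) the quantity ‖m‖_{AE_σ} := inf { Σᵢ |aᵢ| : m = Σᵢ aᵢ m^σ_{uᵢvᵢ}, aᵢ ∈ ℂ, uᵢ ∼ vᵢ }. Then ‖·‖_{AE_σ} is a norm; in particular, ‖m‖_{AE_σ} = 0 implies m = 0. -/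
namespace MagneticGraph

variable {V : Type*}

section Aux

open Pointwise

variable [DecidableEq V] {G : SimpleGraph V} {σ : V → V → ℂ}

/-- Kronecker delta function. -/
def delta (u : V) : V → ℂ := fun x => if x = u then 1 else 0

lemma inAE_zero : InAE G σ 0 :=
  ⟨0, Fin.elim0, Fin.elim0, Fin.elim0, fun i => i.elim0, by simp⟩

lemma inAE_add {m m' : V → ℂ} (h : InAE G σ m) (h' : InAE G σ m') :
    InAE G σ (m + m') := by
  obtain ⟨n, a, p, q, hpq, rfl⟩ := h
  obtain ⟨n', a', p', q', hpq', rfl⟩ := h'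
  refine ⟨n + n', Fin.append a a', Fin.append p p', Fin.append q q', ?_, ?_⟩
  · intro i
    refine Fin.addCases (fun j => ?_) (fun j => ?_) i
    · simpa [Fin.append_left] using hpq j
    · simpa [Fin.append_right] using hpq' j
  · rw [Fin.sum_univ_add]
    congr 1 <;> exact Finset.sum_congr rfl (by intros; simp [Fin.append_left, Fin.append_right])

lemma inAE_smul (c : ℂ) {m : V → ℂ} (h : InAE G σ m) : InAE G σ (c • m) := by
  obtain ⟨n, a, p, q, hpq, rfl⟩ := h
  exact ⟨n, fun i => c * a i, p, q, hpq, by rw [Finset.smul_sum]; simp [smul_smul]⟩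

lemma inAE_atom {u v : V} (h : G.Adj u v) : InAE G σ (atom σ u v) := by
  refine ⟨1, fun _ => 1, fun _ => u, fun _ => v, fun _ => h, ?_⟩
  simp

lemma sigProd_cons {u x v : V} (h : G.Adj u x) (w : G.Walk x v) :
    sigProd σ (SimpleGraph.Walk.cons h w) = σ u x * sigProd σ w := by
  simp [sigProd]

lemma sigProd_abs (hσ : IsSignature G σ) {u v : V} (w : G.Walk u v) :
    ‖sigProd σ w‖ = 1 := by
  induction w with
  | nil => simp [sigProd]
  | cons h w ih => rw [sigProd_cons, norm_mul, (hσ _ _ h).1, ih, one_mul]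

lemma inAE_walk {u v : V} (w : G.Walk u v) :
    InAE G σ (delta u - sigProd σ w • delta v) := by
  induction w with
  | nil => simpa [sigProd] using inAE_zero (G := G) (σ := σ)
  | @cons u x v h w ih =>
    have key : delta u - sigProd σ (SimpleGraph.Walk.cons h w) • delta v
        = atom σ u x + σ u x • (delta x - sigProd σ w • delta v) := by
      funext y
      simp only [sigProd_cons, Pi.sub_apply, Pi.add_apply, Pi.smul_apply, atom, delta,
        smul_eq_mul]
      ring
    rw [key]
    exact inAE_add (inAE_atom h) (inAE_smul _ ih)

lemma inAE_delta (hσ : IsSignature G σ) (hconn : G.Connected) (hunb : Unbalanced G σ)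
    (v : V) : InAE G σ (delta v) := by
  obtain ⟨u, w, -, hne⟩ := hunb
  have h1 : InAE G σ ((1 - sigProd σ w) • delta u) := by
    have := inAE_walk (σ := σ) w
    have e : delta u - sigProd σ w • delta u = (1 - sigProd σ w) • delta u := by
      funext y; simp only [Pi.sub_apply, Pi.smul_apply, smul_eq_mul]; ring
    rwa [e] at this
  have hc : (1 : ℂ) - sigProd σ w ≠ 0 := sub_ne_zero.mpr (Ne.symm hne)
  have hdu : InAE G σ (delta u) := by
    have := inAE_smul ((1 - sigProd σ w)⁻¹) h1
    rwa [smul_smul, inv_mul_cancel₀ hc, one_smul] at this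
  obtain ⟨w'⟩ := hconn u v
  have hw' := inAE_walk (σ := σ) w'
  have hs : sigProd σ w' ≠ 0 := by
    intro h0
    have := sigProd_abs hσ w'
    rw [h0] at this; simp at this
  have hsum : InAE G σ (sigProd σ w' • delta v) := by
    have := inAE_add (inAE_smul (-1 : ℂ) hw') hdu
    have e : (-1 : ℂ) • (delta u - sigProd σ w' • delta v) + delta u
        = sigProd σ w' • delta v := by
      funext y
      simp only [Pi.add_apply, Pi.smul_apply, Pi.sub_apply, smul_eq_mul]; ring
    rwa [e] at this
  have := inAE_smul ((sigProd σ w')⁻¹) hsum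
  rwa [smul_smul, inv_mul_cancel₀ hs, one_smul] at this

lemma inAE_all [Fintype V] (hσ : IsSignature G σ) (hconn : G.Connected)
    (hunb : Unbalanced G σ) (m : V → ℂ) : InAE G σ m := by
  have e : m = ∑ v : V, m v • delta v := by
    funext x
    simp [delta, Finset.sum_ite_eq]
  rw [e]
  exact Finset.sum_induction _ _ (fun _ _ => inAE_add) inAE_zero
    (fun v _ => inAE_smul _ (inAE_delta hσ hconn hunb v))

/-- The set whose infimum defines `aeNorm`. -/
def Sset (G : SimpleGraph V) (σ : V → V → ℂ) (m : V → ℂ) : Set ℝ :=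
  {s : ℝ | ∃ (n : ℕ) (a : Fin n → ℂ) (p q : Fin n → V),
    (∀ i, G.Adj (p i) (q i)) ∧ m = ∑ i, a i • atom σ (p i) (q i) ∧
    s = ∑ i, ‖a i‖}

lemma aeNorm_eq (m : V → ℂ) : aeNorm G σ m = sInf (Sset G σ m) := rfl

lemma Sset_nonneg {m : V → ℂ} {s : ℝ} (hs : s ∈ Sset G σ m) : 0 ≤ s := by
  obtain ⟨n, a, p, q, -, -, rfl⟩ := hs
  exact Finset.sum_nonneg fun i _ => (norm_nonneg _)

lemma Sset_bddBelow (m : V → ℂ) : BddBelow (Sset G σ m) :=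
  ⟨0, fun s hs => Sset_nonneg hs⟩

lemma Sset_nonempty_of_inAE {m : V → ℂ} (h : InAE G σ m) : (Sset G σ m).Nonempty := by
  obtain ⟨n, a, p, q, hpq, he⟩ := h
  exact ⟨∑ i, ‖a i‖, n, a, p, q, hpq, he, rfl⟩

lemma Sset_add {m m' : V → ℂ} {s t : ℝ} (hs : s ∈ Sset G σ m) (ht : t ∈ Sset G σ m') :
    s + t ∈ Sset G σ (m + m') := by
  obtain ⟨n, a, p, q, hpq, he, rfl⟩ := hs
  obtain ⟨n', a', p', q', hpq', he', rfl⟩ := ht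
  refine ⟨n + n', Fin.append a a', Fin.append p p', Fin.append q q', ?_, ?_, ?_⟩
  · intro i
    refine Fin.addCases (fun j => ?_) (fun j => ?_) i
    · simpa [Fin.append_left] using hpq j
    · simpa [Fin.append_right] using hpq' j
  · rw [Fin.sum_univ_add, he, he']
    congr 1 <;> exact Finset.sum_congr rfl (by intros; simp [Fin.append_left, Fin.append_right])
  · rw [Fin.sum_univ_add]
    congr 1 <;> exact Finset.sum_congr rfl (by intros; simp [Fin.append_left, Fin.append_right])

lemma Sset_smul {m : V → ℂ} {s : ℝ} (c : ℂ) (hs : s ∈ Sset G σ m) :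
    ‖c‖ * s ∈ Sset G σ (c • m) := by
  obtain ⟨n, a, p, q, hpq, he, rfl⟩ := hs
  refine ⟨n, fun i => c * a i, p, q, hpq, ?_, ?_⟩
  · rw [he, Finset.smul_sum]; simp [smul_smul]
  · rw [Finset.mul_sum]; simp [map_mul]

lemma Sset_scale_eq {m : V → ℂ} {c : ℂ} (hc : c ≠ 0) :
    Sset G σ (c • m) = ‖c‖ • Sset G σ m := by
  ext s
  constructor
  · intro hs
    have h2 := Sset_smul c⁻¹ hs
    rw [smul_smul, inv_mul_cancel₀ hc, one_smul] at h2
    refine ⟨‖c⁻¹‖ * s, h2, ?_⟩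
    have hac : ‖c‖ ≠ 0 := by simpa using hc
    show ‖c‖ * (‖c⁻¹‖ * s) = s
    rw [norm_inv]
    field_simp
  · rintro ⟨t, ht, rfl⟩
    exact Sset_smul c ht

end Aux

/-- for an unbalanced connected magnetic graph, `‖·‖_{AE_σ}` is a norm;
in particular it is definite. -/
theorem stmt4 {V : Type*} [Fintype V] [DecidableEq V] (G : SimpleGraph V) (σ : V → V → ℂ)
    (hσ : IsSignature G σ) (hconn : G.Connected) (hunb : Unbalanced G σ) :
    (∀ (a : ℂ) (m : V → ℂ), aeNorm G σ (a • m) = ‖a‖ * aeNorm G σ m) ∧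
    (∀ m m' : V → ℂ, aeNorm G σ (m + m') ≤ aeNorm G σ m + aeNorm G σ m') ∧
    (∀ m : V → ℂ, aeNorm G σ m = 0 → m = 0) := by
  obtain ⟨hVne⟩ := hconn.nonempty
  have hall : ∀ m : V → ℂ, (Sset G σ m).Nonempty :=
    fun m => Sset_nonempty_of_inAE (inAE_all hσ hconn hunb m)
  have hzero : aeNorm G σ (0 : V → ℂ) = 0 := by
    rw [aeNorm_eq]
    have h0 : (0 : ℝ) ∈ Sset G σ (0 : V → ℂ) :=
      ⟨0, Fin.elim0, Fin.elim0, Fin.elim0, fun i => i.elim0, by simp, by simp⟩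
    exact le_antisymm (csInf_le (Sset_bddBelow _) h0)
      (le_csInf ⟨0, h0⟩ fun s hs => Sset_nonneg hs)
  refine ⟨?_, ?_, ?_⟩
  · intro a m
    by_cases ha : a = 0
    · simp [ha, hzero]
    · rw [aeNorm_eq, aeNorm_eq, Sset_scale_eq ha, Real.sInf_smul_of_nonneg (norm_nonneg a)]
      rfl
  · intro m m'
    rw [aeNorm_eq, aeNorm_eq, aeNorm_eq]
    refine le_of_forall_pos_le_add fun ε hε => ?_
    obtain ⟨s, hs, hslt⟩ := Real.lt_sInf_add_pos (hall m) (half_pos hε)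
    obtain ⟨t, ht, htlt⟩ := Real.lt_sInf_add_pos (hall m') (half_pos hε)
    have hmem := Sset_add hs ht
    calc sInf (Sset G σ (m + m')) ≤ s + t := csInf_le (Sset_bddBelow _) hmem
      _ ≤ sInf (Sset G σ m) + sInf (Sset G σ m') + ε := by linarith
  · intro m hm
    funext x
    have key : ∀ s ∈ Sset G σ m, ‖m x‖ ≤ 2 * s := by
      rintro s ⟨n, a, p, q, hpq, he, rfl⟩
      have hmx : m x = ∑ i, a i * atom σ (p i) (q i) x := by rw [he]; simp
      rw [hmx, Finset.mul_sum]
      refine (norm_sum_le _ _).trans (Finset.sum_le_sum fun i _ => ?_)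
      rw [norm_mul]
      have hA : ∀ (u : V), ‖if x = u then (1 : ℂ) else 0‖ ≤ 1 := by
        intro u; split_ifs <;> simp
      have hatom : ‖atom σ (p i) (q i) x‖ ≤ 2 := by
        have h1 : ‖σ (p i) (q i)‖ = 1 := (hσ _ _ (hpq i)).1
        simp only [atom]
        refine le_trans (by
          simpa using norm_sub_le
            ((if x = p i then (1 : ℂ) else 0))
            (σ (p i) (q i) * (if x = q i then (1 : ℂ) else 0))) ?_
        have hB : ‖if x = q i then σ (p i) (q i) else 0‖ ≤ 1 := by
          split_ifs <;> simp [h1]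
        have hB2 : ‖σ (p i) (q i) * if x = q i then (1 : ℂ) else 0‖ ≤ 1 := by
          rw [norm_mul, h1, one_mul]; exact hA (q i)
        first
          | linarith [hA (p i), hB]
          | linarith [hA (p i), hB2]
      calc ‖a i‖ * ‖atom σ (p i) (q i) x‖
          ≤ ‖a i‖ * 2 :=
            mul_le_mul_of_nonneg_left hatom (norm_nonneg _)
        _ = 2 * ‖a i‖ := mul_comm _ _
    have h2 : ‖m x‖ / 2 ≤ aeNorm G σ m :=
      le_csInf (hall m) fun s hs => by linarith [key s hs]
    rw [hm] at h2
    have h3 : ‖m x‖ = 0 := le_antisymm (by linarith) (norm_nonneg _)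
    simpa using norm_eq_zero.mp h3

end MagneticGraph
end

section
/- Let (X,σ) be an unbalanced magnetic graph and f: V(X) → ℂ with ‖f‖_{Lip_σ} ≤ 1. Let H_f be the magnetic graph on V(X) whose edges are the σ-satisfied edges of f (edges {u,v} with |f(u) − σ_{uv} f(v)| = 1), with signature the restriction of σ. If every connected component of H_f is unbalanced, then f is an extreme point of the unit ball of Lip_σ(X). -/
namespace MagneticGraph

variable {V : Type*}

/-- `f` is an extreme point of the unit ball of `Lip_σ(X)`. -/
def ExtremePt (G : SimpleGraph V) (σ : V → V → ℂ) (f : V → ℂ) : Prop :=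
  lipNorm G σ f ≤ 1 ∧
  ∀ g : V → ℂ, (∀ t : ℝ, t ∈ Set.Icc (-1 : ℝ) 1 → lipNorm G σ (f + t • g) ≤ 1) → g = 0

/-- The graph `H_f` of σ-satisfied edges of `f`. -/
def satGraph (G : SimpleGraph V) (σ : V → V → ℂ) (f : V → ℂ) : SimpleGraph V :=
  SimpleGraph.fromRel fun u v => G.Adj u v ∧ ‖f u - σ u v * f v‖ = 1

/-- Every connected component of `H` is unbalanced: each vertex can reach an
unbalanced cycle within `H`. -/
def AllComponentsUnbalanced (H : SimpleGraph V) (σ : V → V → ℂ) : Prop :=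
  ∀ u : V, ∃ (x : V) (w : H.Walk x x), H.Reachable u x ∧ w.IsCycle ∧ sigProd σ w ≠ 1
lemma edge_le_lipNorm {V : Type*} [Fintype V] (G : SimpleGraph V) (σ : V → V → ℂ)
    (f : V → ℂ) {u v : V} (h : G.Adj u v) :
    ‖f u - σ u v * f v‖ ≤ lipNorm G σ f := by
  apply le_csSup
  · apply Set.Finite.bddAbove
    apply Set.Finite.subset
      (Set.finite_univ.image (fun p : V × V => ‖f p.1 - σ p.1 p.2 * f p.2‖))
    rintro r ⟨a, b, _, rfl⟩
    exact ⟨(a, b), trivial, rfl⟩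
  · exact ⟨u, v, h, rfl⟩

lemma walk_prop {V : Type*} {H : SimpleGraph V} {σ : V → V → ℂ} {g : V → ℂ}
    (hg : ∀ u v, H.Adj u v → g u = σ u v * g v) :
    ∀ {u x : V} (w : H.Walk u x), g u = sigProd σ w * g x := by
  intro u x w
  induction w with
  | nil => simp [sigProd]
  | cons h p ih =>
    simp only [sigProd, SimpleGraph.Walk.darts_cons, List.map_cons, List.prod_cons] at *
    rw [hg _ _ h, ih]
    ring

/-- if every connected component of the satisfied graph `H_f` is unbalanced,
then `f` is an extreme point of the unit ball of `Lip_σ(X)`. -/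
theorem stmt6 {V : Type*} [Fintype V] (G : SimpleGraph V) (σ : V → V → ℂ)
    (hσ : IsSignature G σ) (hunb : Unbalanced G σ) (f : V → ℂ) (hf : lipNorm G σ f ≤ 1)
    (hH : AllComponentsUnbalanced (satGraph G σ f) σ) :
    ExtremePt G σ f := by
  refine ⟨hf, ?_⟩
  intro g hg
  -- On satisfied edges, the perturbation must vanish.
  have key : ∀ u v, G.Adj u v → ‖f u - σ u v * f v‖ = 1 →
      g u - σ u v * g v = 0 := by
    intro u v huv hsat
    set z : ℂ := f u - σ u v * f v with hz
    set w : ℂ := g u - σ u v * g v with hw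
    have hb : ∀ t : ℝ, t ∈ Set.Icc (-1 : ℝ) 1 → ‖z + (t : ℂ) * w‖ ≤ 1 := by
      intro t ht
      have h1 := edge_le_lipNorm G σ (f + t • g) huv
      have h2 := hg t ht
      have heq : (f + t • g) u - σ u v * (f + t • g) v = z + (t : ℂ) * w := by
        simp only [hz, hw, Pi.add_apply, Pi.smul_apply, Complex.real_smul]
        ring
      rw [heq] at h1
      linarith
    have h1 : ‖z + w‖ ≤ 1 := by
      have := hb 1 ⟨by norm_num, le_refl _⟩
      simpa using this
    have h2 : ‖z - w‖ ≤ 1 := by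
      have := hb (-1) ⟨le_refl _, by norm_num⟩
      simpa [sub_eq_add_neg] using this
    have hn1 : Complex.normSq (z + w) ≤ 1 := by
      rw [← Complex.sq_norm]
      nlinarith [norm_nonneg (z + w)]
    have hn2 : Complex.normSq (z - w) ≤ 1 := by
      rw [← Complex.sq_norm]
      nlinarith [norm_nonneg (z - w)]
    have hzn : Complex.normSq z = 1 := by
      rw [← Complex.sq_norm, hsat]; norm_num
    have hsum : Complex.normSq (z + w) + Complex.normSq (z - w)
        = 2 * Complex.normSq z + 2 * Complex.normSq w := by
      simp only [Complex.normSq_add, Complex.normSq_sub]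
      ring
    have hwn : Complex.normSq w ≤ 0 := by linarith
    have : Complex.normSq w = 0 := le_antisymm hwn (Complex.normSq_nonneg w)
    exact Complex.normSq_eq_zero.mp this
  -- On edges of the satisfied graph, `g u = σ u v * g v`.
  have hedge : ∀ u v, (satGraph G σ f).Adj u v → g u = σ u v * g v := by
    intro u v h
    rw [satGraph, SimpleGraph.fromRel_adj] at h
    rcases h with ⟨hne, h | h⟩
    · have := key u v h.1 h.2
      linear_combination this
    · have h2 := key v u h.1 h.2
      have hs := hσ v u h.1
      have habs : ‖σ v u‖ = 1 := hs.1
      have hconj : σ u v = starRingEnd ℂ (σ v u) := hs.2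
      have hmul : σ u v * σ v u = 1 := by
        rw [hconj, mul_comm, Complex.mul_conj]
        rw [← Complex.sq_norm, habs]
        norm_num
      have h3 : g v = σ v u * g u := by linear_combination h2
      calc g u = (σ u v * σ v u) * g u := by rw [hmul, one_mul]
        _ = σ u v * (σ v u * g u) := by ring
        _ = σ u v * g v := by rw [← h3]
  -- Conclude g = 0 using unbalanced components.
  funext u
  obtain ⟨x, w, hreach, hcyc, hne1⟩ := hH u
  obtain ⟨p⟩ := hreach
  have hx : g x = 0 := by
    have hgx := walk_prop hedge w
    have h0 : (sigProd σ w - 1) * g x = 0 := by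
      rw [sub_mul, one_mul, ← hgx, sub_self]
    rcases mul_eq_zero.mp h0 with h | h
    · exact absurd (by linear_combination h) hne1
    · exact h
  have := walk_prop hedge p
  rw [hx, mul_zero] at this
  simpa using this

end MagneticGraph
end

section
/- Let (X,σ) be an unbalanced magnetic graph and f in the unit ball of Lip_σ(X). If the magnetic graph H_f of σ-satisfied edges of f (edges {u,v} of X with |f(u) − σ_{uv}f(v)| = 1, with signature restricted from σ) has some balanced connected component, then f is not an extreme point of the unit ball of Lip_σ(X). -/
namespace MagneticGraph

variable {V : Type*}

open SimpleGraph in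
lemma sigProd_nil' {G : SimpleGraph V} (σ : V → V → ℂ) (x : V) :
    sigProd σ (Walk.nil : G.Walk x x) = 1 := rfl

open SimpleGraph in
lemma sigProd_cons' {G : SimpleGraph V} (σ : V → V → ℂ) {x y z : V}
    (e : G.Adj x y) (p : G.Walk y z) :
    sigProd σ (Walk.cons e p) = σ x y * sigProd σ p := by
  simp [sigProd]

open SimpleGraph in
lemma sigProd_append' {G : SimpleGraph V} (σ : V → V → ℂ) {x y z : V}
    (p : G.Walk x y) (q : G.Walk y z) :
    sigProd σ (p.append q) = sigProd σ p * sigProd σ q := by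
  simp [sigProd, SimpleGraph.Walk.darts_append]

open SimpleGraph in
lemma sigProd_of_length_zero {G : SimpleGraph V} (σ : V → V → ℂ) {x y : V}
    {w : G.Walk x y} (h : w.length = 0) : sigProd σ w = 1 := by
  have hd : w.darts = [] := List.length_eq_zero_iff.mp (by rw [Walk.length_darts, h])
  simp [sigProd, hd]

lemma sig_mul_symm {G : SimpleGraph V} {σ : V → V → ℂ} (hσ : IsSignature G σ)
    {x y : V} (h : G.Adj x y) : σ x y * σ y x = 1 := by
  obtain ⟨h1, h2⟩ := hσ x y h
  rw [h2, Complex.mul_conj, Complex.normSq_eq_norm_sq, h1]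
  norm_num

open SimpleGraph in
lemma abs_sigProd {G H : SimpleGraph V} {σ : V → V → ℂ} (hσ : IsSignature G σ)
    (hle : ∀ a b, H.Adj a b → G.Adj a b) {x y : V} (w : H.Walk x y) :
    ‖sigProd σ w‖ = 1 := by
  induction w with
  | nil => simp [sigProd]
  | cons e p ih =>
    rw [sigProd_cons', norm_mul, ih, mul_one]
    exact (hσ _ _ (hle _ _ e)).1

open SimpleGraph in
lemma sigProd_reverse' {G H : SimpleGraph V} {σ : V → V → ℂ} (hσ : IsSignature G σ)
    (hle : ∀ a b, H.Adj a b → G.Adj a b) {x y : V} (w : H.Walk x y) :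
    sigProd σ w.reverse = (sigProd σ w)⁻¹ := by
  induction w with
  | nil => simp [sigProd]
  | cons e p ih =>
    rw [Walk.reverse_cons, sigProd_append', ih, sigProd_cons', sigProd_cons', sigProd_nil',
      mul_one, mul_inv, eq_inv_of_mul_eq_one_right (sig_mul_symm hσ (hle _ _ e))]
    ring

open SimpleGraph in
lemma sigProd_closed {G H : SimpleGraph V} {σ : V → V → ℂ}
    (hσ : IsSignature G σ) (hle : ∀ a b, H.Adj a b → G.Adj a b) (u : V)
    (hbal : ∀ (x : V) (w : H.Walk x x), H.Reachable u x → w.IsCycle → sigProd σ w = 1)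
    (n : ℕ) : ∀ (x : V) (w : H.Walk x x), w.length = n → H.Reachable u x → sigProd σ w = 1 := by
  classical
  induction n using Nat.strong_induction_on with
  | _ n IH =>
  intro x w hlen hux
  rcases Nat.eq_zero_or_pos n with rfl | hn
  · exact sigProd_of_length_zero σ hlen
  · have hwnil : ¬ w.Nil := by rw [Walk.not_nil_iff_lt_length]; omega
    obtain ⟨y, e, p, rfl⟩ := Walk.not_nil_iff.mp hwnil
    rw [Walk.length_cons] at hlen
    rcases Nat.lt_or_ge n 3 with h3 | h3
    · -- n = 1 or n = 2
      rcases Nat.eq_zero_or_pos p.length with h0 | h1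
      · exact absurd (Walk.eq_of_length_eq_zero h0).symm e.ne
      · -- n = 2
        have hpnil : ¬ p.Nil := by rw [Walk.not_nil_iff_lt_length]; omega
        obtain ⟨z, e2, p2, rfl⟩ := Walk.not_nil_iff.mp hpnil
        rw [Walk.length_cons] at hlen
        have h0 : p2.length = 0 := by omega
        have hzx : z = x := Walk.eq_of_length_eq_zero h0
        subst hzx
        rw [sigProd_cons', sigProd_cons', sigProd_of_length_zero σ h0, mul_one]
        exact sig_mul_symm hσ (hle _ _ e)
    · -- n ≥ 3
      by_cases hnd : p.support.Nodup
      · by_cases hmem : s(x, y) ∈ p.edges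
        · exfalso
          have hpnil : ¬ p.Nil := by rw [Walk.not_nil_iff_lt_length]; omega
          obtain ⟨z, e2, p2, rfl⟩ := Walk.not_nil_iff.mp hpnil
          rw [Walk.support_cons, List.nodup_cons] at hnd
          obtain ⟨hy2, hnd2⟩ := hnd
          rw [Walk.edges_cons, List.mem_cons] at hmem
          rcases hmem with heq | hmem2
          · rw [Sym2.eq_iff] at heq
            rcases heq with ⟨hxy, -⟩ | ⟨hxz, -⟩
            · exact e.ne hxy
            · subst hxz
              have hp2 : p2 = Walk.nil := Walk.isPath_iff_eq_nil.mp (Walk.IsPath.mk' hnd2)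
              have h0 : p2.length = 0 := by rw [hp2]; rfl
              rw [Walk.length_cons] at hlen
              omega
          · exact hy2 (Walk.snd_mem_support_of_mem_edges p2 hmem2)
        · exact hbal x (Walk.cons e p) hux
            ((Walk.cons_isCycle_iff p e).mpr ⟨Walk.IsPath.mk' hnd, hmem⟩)
      · -- a repeated vertex in p.support
        obtain ⟨v, hv2⟩ : ∃ v, 2 ≤ List.count v p.support := by
          by_contra hc
          push_neg at hc
          exact hnd (List.nodup_iff_count_le_one.mpr fun a => by have := hc a; omega)
        have hv1 : v ∈ p.support := by
          rw [← List.count_pos_iff]; omega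
        have hspec := p.take_spec hv1
        have hcq := p.count_support_takeUntil_eq_one hv1
        have hsupp := congrArg Walk.support hspec
        rw [Walk.support_append] at hsupp
        have hvr : v ∈ (p.dropUntil v hv1).support.tail := by
          rw [← List.count_pos_iff]
          rw [← hsupp, List.count_append] at hv2
          omega
        have hrnil : ¬ (p.dropUntil v hv1).Nil := by
          intro hnil
          have hl : (p.dropUntil v hv1).length = 0 := Walk.nil_iff_length_eq.mp hnil
          have ht0 : (p.dropUntil v hv1).support.tail.length = 0 := by
            rw [List.length_tail, Walk.length_support, hl]
          rw [List.length_eq_zero_iff.mp ht0] at hvr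
          exact List.not_mem_nil hvr
        obtain ⟨z, e3, r2, hre⟩ := Walk.not_nil_iff.mp hrnil
        have hvr2 : v ∈ r2.support := by
          rw [hre, Walk.support_cons, List.tail_cons] at hvr
          exact hvr
        have hspec2 := r2.take_spec hvr2
        have hP : p = (p.takeUntil v hv1).append
            (Walk.cons e3 ((r2.takeUntil v hvr2).append (r2.dropUntil v hvr2))) := by
          rw [hspec2, ← hre, hspec]
        -- length bookkeeping
        have hlp := congrArg Walk.length hP
        simp only [Walk.length_append, Walk.length_cons] at hlp
        have l1 : (Walk.cons e ((p.takeUntil v hv1).append (r2.dropUntil v hvr2))).length < n := by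
          simp only [Walk.length_append, Walk.length_cons]; omega
        have l2 : (Walk.cons e3 (r2.takeUntil v hvr2)).length < n := by
          simp only [Walk.length_cons]; omega
        have huv : H.Reachable u v := hux.trans
          ⟨(Walk.cons e p).takeUntil v (by rw [Walk.support_cons]; exact List.mem_cons_of_mem _ hv1)⟩
        have E1 := IH _ l1 x _ rfl hux
        have E2 := IH _ l2 v _ rfl huv
        rw [sigProd_cons', sigProd_append'] at E1
        rw [sigProd_cons'] at E2
        rw [hP, sigProd_cons', sigProd_append', sigProd_cons', sigProd_append']
        linear_combination (σ v z * sigProd σ (r2.takeUntil v hvr2)) * E1 + E2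

/-- if the satisfied graph `H_f` has some balanced connected component,
then `f` is not an extreme point of the unit ball of `Lip_σ(X)`. -/
theorem stmt7 {V : Type*} [Fintype V] (G : SimpleGraph V) (σ : V → V → ℂ)
    (hσ : IsSignature G σ) (hunb : Unbalanced G σ) (f : V → ℂ) (hf : lipNorm G σ f ≤ 1)
    (hH : ∃ u : V, ∀ (x : V) (w : (satGraph G σ f).Walk x x),
      (satGraph G σ f).Reachable u x → w.IsCycle → sigProd σ w = 1) :
    ¬ ExtremePt G σ f := by
  classical
  obtain ⟨u, hbal⟩ := hH
  set H : SimpleGraph V := satGraph G σ f with hHdef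
  have hle : ∀ a b, H.Adj a b → G.Adj a b := by
    intro a b hab
    rw [hHdef, satGraph, SimpleGraph.fromRel_adj] at hab
    rcases hab with ⟨-, h | h⟩
    · exact h.1
    · exact h.1.symm
  have key : ∀ (x : V) (w : H.Walk x x), H.Reachable u x → sigProd σ w = 1 :=
    fun x w hux => sigProd_closed hσ hle u hbal w.length x w rfl hux
  -- the balancing function on the component of u
  obtain ⟨h, hpos, hneg⟩ : ∃ h : V → ℂ,
      (∀ v (hv : H.Reachable u v), h v = (sigProd σ (Classical.choice hv : H.Walk u v))⁻¹) ∧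
      (∀ v, ¬ H.Reachable u v → h v = 0) :=
    ⟨fun v => if hv : H.Reachable u v then (sigProd σ (Classical.choice hv : H.Walk u v))⁻¹
      else 0, fun v hv => dif_pos hv, fun v hv => dif_neg hv⟩
  have habs_eq : ∀ v (hv : H.Reachable u v), ‖h v‖ = 1 := by
    intro v hv
    rw [hpos v hv, norm_inv, abs_sigProd hσ hle, inv_one]
  have habs_le : ∀ v, ‖h v‖ ≤ 1 := by
    intro v
    by_cases hv : H.Reachable u v
    · rw [habs_eq v hv]
    · rw [hneg v hv]; simp
  have hu1 : ‖h u‖ = 1 := habs_eq u (SimpleGraph.Reachable.refl u)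
  -- the key relation on satisfied edges
  have hrel : ∀ x y, H.Adj x y → h x = σ x y * h y := by
    intro x y e
    by_cases hx : H.Reachable u x
    · have hy : H.Reachable u y := hx.trans e.reachable
      have hc := key u (((Classical.choice hx : H.Walk u x)).append
        ((SimpleGraph.Walk.cons e SimpleGraph.Walk.nil).append
          (Classical.choice hy : H.Walk u y).reverse)) (SimpleGraph.Reachable.refl u)
      rw [sigProd_append', sigProd_append', sigProd_cons', sigProd_nil', mul_one,
        sigProd_reverse' hσ hle] at hc
      rw [hpos x hx, hpos y hy]
      rw [← mul_assoc] at hc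
      exact (eq_inv_of_mul_eq_one_right (by linear_combination hc)).symm
    · have hy : ¬ H.Reachable u y := fun hy => hx (hy.trans e.symm.reachable)
      rw [hneg x hx, hneg y hy, mul_zero]
  have hbdd : BddAbove {r : ℝ | ∃ a b, G.Adj a b ∧ r = ‖f a - σ a b * f b‖} := by
    apply Set.Finite.bddAbove
    apply (Set.finite_range (fun p : V × V => ‖f p.1 - σ p.1 p.2 * f p.2‖)).subset
    rintro r ⟨a, b, -, rfl⟩
    exact ⟨(a, b), rfl⟩
  have hedge : ∀ x y, G.Adj x y → ‖f x - σ x y * f y‖ ≤ 1 := by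
    intro x y hxy
    rw [lipNorm] at hf
    exact le_trans (le_csSup hbdd ⟨x, y, hxy, rfl⟩) hf
  have hdiff0 : ∀ x y, G.Adj x y → ‖f x - σ x y * f y‖ = 1 →
      h x - σ x y * h y = 0 := by
    intro x y hxy habs
    have hadjH : H.Adj x y := by
      rw [hHdef, satGraph, SimpleGraph.fromRel_adj]
      exact ⟨hxy.ne, Or.inl ⟨hxy, habs⟩⟩
    rw [hrel x y hadjH, sub_self]
  rintro ⟨-, hext⟩
  set T : Finset (V × V) :=
    Finset.univ.filter (fun p => G.Adj p.1 p.2 ∧ h p.1 - σ p.1 p.2 * h p.2 ≠ 0) with hT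
  by_cases hTne : T.Nonempty
  · -- some edge is perturbed; use the max over perturbed edges
    have hTlt : ∀ p ∈ T, ‖f p.1 - σ p.1 p.2 * f p.2‖ < 1 := by
      intro p hp
      rw [hT, Finset.mem_filter] at hp
      obtain ⟨-, hadj, hne⟩ := hp
      rcases lt_or_eq_of_le (hedge p.1 p.2 hadj) with hlt | heq
      · exact hlt
      · exact absurd (hdiff0 _ _ hadj heq) hne
    obtain ⟨M, hMle, hM1⟩ : ∃ M : ℝ,
        (∀ p ∈ T, ‖f p.1 - σ p.1 p.2 * f p.2‖ ≤ M) ∧ M < 1 := by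
      exact ⟨T.sup' hTne (fun p => ‖f p.1 - σ p.1 p.2 * f p.2‖),
        fun p hp => Finset.le_sup'
          (fun q : V × V => ‖f q.1 - σ q.1 q.2 * f q.2‖) hp,
        (Finset.sup'_lt_iff hTne).mpr hTlt⟩
    set ε : ℝ := (1 - M) / 2 with hε
    have hεpos : 0 < ε := by rw [hε]; linarith
    have hg := hext (fun v => (ε : ℂ) * h v) ?_
    · have h0 : (ε : ℂ) * h u = 0 := by
        have := congrFun hg u
        simpa using this
      rcases mul_eq_zero.mp h0 with h1 | h1
      · exact absurd (Complex.ofReal_eq_zero.mp h1) (ne_of_gt hεpos)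
      · rw [h1] at hu1; simp at hu1
    · intro t ht
      obtain ⟨ht1, ht2⟩ := ht
      rw [lipNorm]
      apply Real.sSup_le _ zero_le_one
      rintro r ⟨a, b, hab, rfl⟩
      have key2 : (f + t • fun v => (ε : ℂ) * h v) a -
          σ a b * (f + t • fun v => (ε : ℂ) * h v) b =
          (f a - σ a b * f b) + ((t : ℂ) * (ε : ℂ)) * (h a - σ a b * h b) := by
        simp only [Pi.add_apply, Pi.smul_apply, Complex.real_smul]
        ring
      rw [key2]
      by_cases hd : h a - σ a b * h b = 0
      · rw [hd, mul_zero, add_zero]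
        exact hedge a b hab
      · have hmem : (a, b) ∈ T := by
          rw [hT, Finset.mem_filter]
          exact ⟨Finset.mem_univ _, hab, hd⟩
        have hA : ‖f a - σ a b * f b‖ ≤ M := hMle (a, b) hmem
        have hB : ‖h a - σ a b * h b‖ ≤ 2 := by
          calc ‖h a - σ a b * h b‖
              ≤ ‖h a‖ + ‖σ a b * h b‖ := by
                simpa [sub_eq_add_neg] using norm_add_le (h a) (-(σ a b * h b))
            _ ≤ 1 + 1 * 1 := by
                rw [norm_mul, (hσ a b hab).1]
                exact add_le_add (habs_le a) (by simpa using habs_le b)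
            _ = 2 := by norm_num
        have hC : ‖((t : ℂ) * (ε : ℂ)) * (h a - σ a b * h b)‖ ≤ ε * 2 := by
          rw [norm_mul, norm_mul, Complex.norm_real, Complex.norm_real, Real.norm_eq_abs, Real.norm_eq_abs,
            abs_of_pos hεpos]
          have htabs : |t| ≤ 1 := abs_le.mpr ⟨ht1, ht2⟩
          calc |t| * ε * ‖h a - σ a b * h b‖ ≤ 1 * ε * 2 := by
                apply mul_le_mul (mul_le_mul_of_nonneg_right htabs (le_of_lt hεpos)) hB
                  (norm_nonneg _)
                positivity
            _ = ε * 2 := by ring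
        calc ‖(f a - σ a b * f b) + ((t : ℂ) * (ε : ℂ)) * (h a - σ a b * h b)‖
            ≤ ‖f a - σ a b * f b‖ +
              ‖((t : ℂ) * (ε : ℂ)) * (h a - σ a b * h b)‖ :=
              norm_add_le _ _
          _ ≤ M + ε * 2 := add_le_add hA hC
          _ = 1 := by rw [hε]; ring
  · -- no edge is perturbed at all: use h itself
    have hzero : ∀ x y, G.Adj x y → h x - σ x y * h y = 0 := by
      intro x y hxy
      by_contra hne
      exact hTne ⟨(x, y), by rw [hT, Finset.mem_filter]; exact ⟨Finset.mem_univ _, hxy, hne⟩⟩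
    have hg := hext h ?_
    · rw [hg] at hu1; simp at hu1
    · intro t ht
      rw [lipNorm]
      apply Real.sSup_le _ zero_le_one
      rintro r ⟨a, b, hab, rfl⟩
      have key2 : (f + t • h) a - σ a b * (f + t • h) b =
          (f a - σ a b * f b) + (t : ℂ) * (h a - σ a b * h b) := by
        simp only [Pi.add_apply, Pi.smul_apply, Complex.real_smul]
        ring
      rw [key2, hzero a b hab, mul_zero, add_zero]
      exact hedge a b hab


end MagneticGraph
end

section
/- Let (X,σ) be a magnetic graph with σ taking values in the group S¹_p of p-th roots of unity, and let X̂ be its lift graph. The compression map 𝒞: AE(X̂) → AE_σ(X), defined by (𝒞m)(u) = Σ_{ξ ∈ S¹_p} ξ · m(u, ξ), is a surjective linear map, and for adjacent lift vertices (u, ω) and (v, ωσ_{uv}) it satisfies 𝒞(m_{(u,ω),(v,ωσ_{uv})}) = ω · m^σ_{uv}. -/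
namespace MagneticGraph

variable {V : Type*}

/-- The lift graph of `(X,σ)` on vertex set `V × S¹_p`: `(u,ω) ∼ (v,ω')` iff
`u ∼ v` and `ω' = ω σ_{uv}`. -/
def liftGraph (G : SimpleGraph V) (σ : V → V → ℂ) (p : ℕ) :
    SimpleGraph (V × rootsOfUnity p ℂ) :=
  SimpleGraph.fromRel fun a b =>
    G.Adj a.1 b.1 ∧ ((b.2 : ℂˣ) : ℂ) = ((a.2 : ℂˣ) : ℂ) * σ a.1 b.1

/-- The trivial signature. -/
def triv {W : Type*} : W → W → ℂ := fun _ _ => 1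

/-- The compression map `(𝒞 m)(u) = Σ_{ξ ∈ S¹_p} ξ · m(u,ξ)`. -/
noncomputable def compress {V : Type*} (p : ℕ) [NeZero p] (m : V × rootsOfUnity p ℂ → ℂ) : V → ℂ :=
  haveI := Fintype.ofFinite (rootsOfUnity p ℂ)
  fun u => ∑ ξ : rootsOfUnity p ℂ, ((ξ : ℂˣ) : ℂ) * m (u, ξ)

noncomputable instance instFintypeRootsOfUnityC (p : ℕ) [NeZero p] :
    Fintype (rootsOfUnity p ℂ) := Fintype.ofFinite _

open Finset in
lemma compress_delta {V : Type*} [DecidableEq V] (p : ℕ) [NeZero p] (u' w : V)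
    (ω : rootsOfUnity p ℂ) :
    ∑ ξ : rootsOfUnity p ℂ, ((ξ : ℂˣ) : ℂ) * (if (u', ξ) = (w, ω) then (1:ℂ) else 0)
      = if u' = w then ((ω : ℂˣ) : ℂ) else 0 := by
  classical
  by_cases h : u' = w
  · subst h; simp [Prod.ext_iff, mul_ite]
  · simp [Prod.ext_iff, h]

lemma compress_atom_triv {V : Type*} [DecidableEq V] (p : ℕ) [NeZero p] (σ : V → V → ℂ)
    (u v : V) (ω ω' : rootsOfUnity p ℂ)
    (h : ((ω' : ℂˣ) : ℂ) = ((ω : ℂˣ) : ℂ) * σ u v) :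
    compress p (atom triv (u, ω) (v, ω')) = ((ω : ℂˣ) : ℂ) • atom σ u v := by
  classical
  funext u'
  simp only [compress, atom, triv, one_mul, mul_sub, Finset.sum_sub_distrib,
    compress_delta, Pi.smul_apply, smul_eq_mul]
  rw [h]
  ring_nf
  by_cases h1 : u' = u <;> by_cases h2 : u' = v <;> simp [h1, h2] <;> ring

lemma compress_sum {V : Type*} (p : ℕ) [NeZero p] {n : ℕ} (a : Fin n → ℂ)
    (f : Fin n → (V × rootsOfUnity p ℂ → ℂ)) :
    compress p (∑ i, a i • f i) = ∑ i, a i • compress p (f i) := by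
  funext u
  simp only [compress, Finset.sum_apply, Pi.smul_apply, smul_eq_mul, Finset.mul_sum]
  rw [Finset.sum_comm]
  congr 1; ext i; congr 1; ext ξ; ring

/-- the compression map is linear, surjective from `AE(X̂)` onto `AE_σ(X)`,
and sends the classical atom `m_{(u,ω),(v,ωσ_{uv})}` to `ω · m^σ_{uv}`. -/
theorem stmt9 {V : Type*} [Fintype V] [DecidableEq V] (G : SimpleGraph V) (σ : V → V → ℂ)
    (p : ℕ) [NeZero p] (hσ : IsSignature G σ)
    (hval : ∀ u v, G.Adj u v → σ u v ^ p = 1) :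
    (∀ (a : ℂ) (m₁ m₂ : V × rootsOfUnity p ℂ → ℂ),
      compress p (a • m₁ + m₂) = a • compress p m₁ + compress p m₂) ∧
    (∀ m : V → ℂ, InAE G σ m →
      ∃ m' : V × rootsOfUnity p ℂ → ℂ,
        InAE (liftGraph G σ p) triv m' ∧ compress p m' = m) ∧
    (∀ u v, G.Adj u v → ∀ ω ω' : rootsOfUnity p ℂ,
      ((ω' : ℂˣ) : ℂ) = ((ω : ℂˣ) : ℂ) * σ u v →
      compress p (atom triv (u, ω) (v, ω')) = ((ω : ℂˣ) : ℂ) • atom σ u v) := by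
  classical
  refine ⟨?_, ?_, ?_⟩
  · intro a m₁ m₂
    funext u
    simp [compress, mul_add, Finset.sum_add_distrib, Finset.mul_sum, mul_left_comm]
  · rintro m ⟨n, a, pp, qq, hadj, hm⟩
    have hne : ∀ i, σ (pp i) (qq i) ≠ 0 := by
      intro i h0
      have := (hσ _ _ (hadj i)).1
      rw [h0] at this; simp at this
    have hmem : ∀ i, Units.mk0 (σ (pp i) (qq i)) (hne i) ∈ rootsOfUnity p ℂ := by
      intro i
      rw [mem_rootsOfUnity]
      ext
      push_cast
      exact hval _ _ (hadj i)
    set ω : Fin n → rootsOfUnity p ℂ := fun i => ⟨_, hmem i⟩ with hω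
    refine ⟨∑ i, a i • atom triv (pp i, 1) (qq i, ω i),
      ⟨n, a, fun i => (pp i, 1), fun i => (qq i, ω i), ?_, rfl⟩, ?_⟩
    · intro i
      refine ⟨?_, Or.inl ⟨hadj i, ?_⟩⟩
      · intro hcon
        exact (hadj i).ne (congrArg Prod.fst hcon)
      · simp [hω, Units.val_mk0]
    · rw [compress_sum, hm]
      congr 1; ext i
      rw [compress_atom_triv p σ _ _ _ _ (by simp [hω, Units.val_mk0])]
      simp
  · intro u v _ ω ω' h
    exact compress_atom_triv p σ u v ω ω' h


end MagneticGraph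
end
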